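/- For any two quantum states ρ and σ on a finite-dimensional Hilbert space, with fidelity F(ρ,σ) = (Tr√(√ρ σ √ρ))², the following inequalities hold: 1 − √F(ρ,σ) ≤ (1/2)‖ρ − σ‖₁ ≤ √(1 − F(ρ,σ)). -/

import Mathlib

open scoped ComplexOrder

/-- The square root of a positive semidefinite matrix, as defined in the older Mathlib. -/
noncomputable def Matrix.PosSemidef.sqrt {n : Type*} [Fintype n] [DecidableEq n] {A : Matrix n n ℂ}
    (hA : A.PosSemidef) : Matrix n n ℂ :=
  hA.1.eigenvectorUnitary.1 * Matrix.diagonal ((↑) ∘ (√·) ∘ hA.1.eigenvalues) *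
    (star hA.1.eigenvectorUnitary : Matrix n n ℂ)

/-- The trace norm `‖A‖₁ = Tr √(Aᴴ A)` of a complex matrix. -/
noncomputable def traceNorm {n : Type*} [Fintype n] [DecidableEq n] (A : Matrix n n ℂ) : ℝ :=
  ((Matrix.posSemidef_conjTranspose_mul_self A).sqrt).trace.re

/-- The Uhlmann fidelity `F(ρ,σ) = ‖√ρ √σ‖₁²`. -/
noncomputable def fidelity {n : Type*} [Fintype n] [DecidableEq n]
    {ρ σ : Matrix n n ℂ} (hρ : ρ.PosSemidef) (hσ : σ.PosSemidef) : ℝ :=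
  traceNorm (hρ.sqrt * hσ.sqrt) ^ 2

namespace Matrix.PosSemidef

open scoped MatrixOrder

variable {n : Type*} [Fintype n] [DecidableEq n]

lemma sqrt_eq_cfcSqrt {A : Matrix n n ℂ} (hA : A.PosSemidef) : hA.sqrt = CFC.sqrt A := by
  have h0 : 0 ≤ A := Matrix.nonneg_iff_posSemidef.mpr hA
  rw [CFC.sqrt_eq_real_sqrt A h0, cfcₙ_eq_cfc, hA.1.cfc_eq]
  simp only [Matrix.PosSemidef.sqrt, Matrix.IsHermitian.cfc, Unitary.conjStarAlgAut_apply]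
  rfl

lemma posSemidef_sqrt {A : Matrix n n ℂ} (hA : A.PosSemidef) : hA.sqrt.PosSemidef := by
  rw [sqrt_eq_cfcSqrt]
  exact Matrix.nonneg_iff_posSemidef.mp (CFC.sqrt_nonneg A)

lemma sqrt_mul_self {A : Matrix n n ℂ} (hA : A.PosSemidef) : hA.sqrt * hA.sqrt = A := by
  rw [sqrt_eq_cfcSqrt]
  exact CFC.sqrt_mul_sqrt_self A (Matrix.nonneg_iff_posSemidef.mpr hA)

lemma eq_sqrt_of_sq_eq {A : Matrix n n ℂ} (hA : A.PosSemidef) (B : Matrix n n ℂ)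
    {hB : B.PosSemidef} (h : A ^ 2 = B) : A = hB.sqrt := by
  rw [sqrt_eq_cfcSqrt, eq_comm, CFC.sqrt_eq_iff B A (Matrix.nonneg_iff_posSemidef.mpr hB)
    (Matrix.nonneg_iff_posSemidef.mpr hA), ← h, sq]

end Matrix.PosSemidef

namespace FvG

open Matrix

variable {n : Type*} [Fintype n] [DecidableEq n]

lemma spectral_thm {A : Matrix n n ℂ} (hA : A.IsHermitian) :
    A = (hA.eigenvectorUnitary : Matrix n n ℂ) * Matrix.diagonal (RCLike.ofReal ∘ hA.eigenvalues)
      * star (hA.eigenvectorUnitary : Matrix n n ℂ) :=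
  hA.spectral_theorem

lemma trace_unitary_conj {V : Matrix n n ℂ} (D : Matrix n n ℂ)
    (hV : V ∈ Matrix.unitaryGroup n ℂ) :
    (V * D * star V).trace = D.trace := by
  rw [Matrix.trace_mul_comm, ← Matrix.mul_assoc, Matrix.mem_unitaryGroup_iff'.mp hV,
    Matrix.one_mul]

lemma diag_entry_of_posSemidef {A : Matrix n n ℂ} (hA : A.PosSemidef) (i : n) :
    0 ≤ (A i i).re ∧ (A i i).im = 0 := by
  have h := hA.dotProduct_mulVec_nonneg (Pi.single i 1)
  have heq : dotProduct (star (Pi.single i 1)) (A *ᵥ Pi.single i 1) = A i i := by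
    simp [dotProduct, Matrix.mulVec, Pi.single_apply, Finset.mul_sum]
  rw [heq] at h
  rw [Complex.le_def] at h
  exact ⟨by simpa using h.1, by simpa using h.2.symm⟩

lemma trace_re_nonneg_of_posSemidef {A : Matrix n n ℂ} (hA : A.PosSemidef) :
    0 ≤ A.trace.re := by
  rw [Matrix.trace, Complex.re_sum]
  exact Finset.sum_nonneg fun i _ => (diag_entry_of_posSemidef hA i).1

lemma traceNorm_eq_of_svd {M W V : Matrix n n ℂ} (hW : W ∈ Matrix.unitaryGroup n ℂ)
    (hV : V ∈ Matrix.unitaryGroup n ℂ) {s : n → ℝ} (hs : ∀ i, 0 ≤ s i)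
    (hM : M = W * Matrix.diagonal (fun i => (s i : ℂ)) * star V) :
    traceNorm M = ∑ i, s i := by
  set D : Matrix n n ℂ := Matrix.diagonal (fun i => (s i : ℂ)) with hD
  have hDpos : D.PosSemidef := by
    rw [hD]
    refine Matrix.posSemidef_diagonal_iff.mpr fun i => ?_
    simpa using Complex.zero_le_real.mpr (hs i)
  have hR : (V * D * star V).PosSemidef := by
    rw [Matrix.star_eq_conjTranspose]
    exact hDpos.mul_mul_conjTranspose_same V
  have hDD : D * D = Matrix.diagonal (fun i => ((s i * s i : ℝ) : ℂ)) := by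
    rw [hD, Matrix.diagonal_mul_diagonal]
    congr 1; funext i; push_cast; ring
  have hsq : (V * D * star V) ^ 2 = Mᴴ * M := by
    have hDH : Dᴴ = D := by
      rw [hD, Matrix.diagonal_conjTranspose]
      have : (star fun i => ((s i : ℝ) : ℂ)) = fun i => ((s i : ℝ) : ℂ) := by
        funext i; simp [Complex.conj_ofReal]
      rw [this]
    have hWW : Wᴴ * W = 1 := by
      rw [← Matrix.star_eq_conjTranspose]; exact Matrix.mem_unitaryGroup_iff'.mp hW
    have hVV : Vᴴ * V = 1 := by
      rw [← Matrix.star_eq_conjTranspose]; exact Matrix.mem_unitaryGroup_iff'.mp hV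
    rw [hM, Matrix.conjTranspose_mul, Matrix.conjTranspose_mul, Matrix.star_eq_conjTranspose,
      Matrix.conjTranspose_conjTranspose, hDH, pow_two]
    simp only [Matrix.mul_assoc]
    have h1 : Vᴴ * (V * (D * Vᴴ)) = Wᴴ * (W * (D * Vᴴ)) := by
      rw [← Matrix.mul_assoc Vᴴ V _, hVV, ← Matrix.mul_assoc Wᴴ W _, hWW]
    rw [h1]
  have hkey : V * D * star V = (Matrix.posSemidef_conjTranspose_mul_self M).sqrt :=
    hR.eq_sqrt_of_sq_eq _ hsq
  rw [traceNorm, ← hkey, trace_unitary_conj _ hV, hD, Matrix.trace_diagonal]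
  rw [Complex.re_sum]
  simp


lemma exists_svd (M : Matrix n n ℂ) :
    ∃ (W V : Matrix n n ℂ) (s : n → ℝ), W ∈ Matrix.unitaryGroup n ℂ ∧
      V ∈ Matrix.unitaryGroup n ℂ ∧ (∀ i, 0 ≤ s i) ∧
      M = W * Matrix.diagonal (fun i => (s i : ℂ)) * star V := by
  classical
  have hPSD := Matrix.posSemidef_conjTranspose_mul_self M
  have hH := hPSD.1
  set V : Matrix n n ℂ := (hH.eigenvectorUnitary : Matrix n n ℂ) with hVdef
  have hVmem : V ∈ Matrix.unitaryGroup n ℂ := hH.eigenvectorUnitary.2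
  set d : n → ℝ := hH.eigenvalues with hd
  have hd0 : ∀ i, 0 ≤ d i := fun i => hPSD.eigenvalues_nonneg i
  set s : n → ℝ := fun i => Real.sqrt (d i) with hs
  have hss : ∀ i, s i * s i = d i := fun i => Real.mul_self_sqrt (hd0 i)
  set X : Matrix n n ℂ := M * V with hX
  have hVV : star V * V = 1 := Matrix.mem_unitaryGroup_iff'.mp hVmem
  have hVV' : V * star V = 1 := Matrix.mem_unitaryGroup_iff.mp hVmem
  have hXX : Xᴴ * X = Matrix.diagonal (fun i => (d i : ℂ)) := by
    have hspec := spectral_thm hH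
    rw [hX, Matrix.conjTranspose_mul, ← Matrix.star_eq_conjTranspose V]
    calc star V * Mᴴ * (M * V) = star V * (Mᴴ * M) * V := by
          simp only [Matrix.mul_assoc]
      _ = star V * (V * Matrix.diagonal (RCLike.ofReal ∘ d) * star V) * V := by
          rw [← hspec]
      _ = Matrix.diagonal (fun i => (d i : ℂ)) := by
          simp only [Matrix.mul_assoc]
          rw [hVV, Matrix.mul_one, ← Matrix.mul_assoc, hVV, Matrix.one_mul]
          rfl
  let col : n → EuclideanSpace ℂ n := fun i => WithLp.toLp 2 (fun k => X k i)
  have hcol : ∀ i j, (inner ℂ (col i) (col j) : ℂ) = if i = j then (d i : ℂ) else 0 := by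
    intro i j
    have : (Xᴴ * X) i j = if i = j then (d i : ℂ) else 0 := by
      rw [hXX]; simp [Matrix.diagonal_apply]
    rw [← this]
    simp [PiLp.inner_apply, RCLike.inner_apply, Matrix.mul_apply, Matrix.conjTranspose_apply, col, mul_comm]
  let v : n → EuclideanSpace ℂ n := fun i => (((s i)⁻¹ : ℝ) : ℂ) • col i
  have hortho : Orthonormal ℂ (Set.restrict {i | d i ≠ 0} v) := by
    rw [orthonormal_iff_ite]
    rintro ⟨i, hi⟩ ⟨j, hj⟩
    change inner ℂ (v i) (v j) = if (⟨i, hi⟩ : {i | d i ≠ 0}) = ⟨j, hj⟩ then 1 else 0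
    simp only [Set.restrict_apply, v]
    rw [inner_smul_left, inner_smul_right, hcol]
    have hdi : 0 < d i := lt_of_le_of_ne (hd0 i) (Ne.symm hi)
    have hsi : s i ≠ 0 := by positivity
    have hsiC : ((s i : ℝ) : ℂ) ≠ 0 := by exact_mod_cast hsi
    by_cases hij : i = j
    · subst hij
      have h1 : (if i = i then ((d i : ℝ) : ℂ) else 0) = ((d i : ℝ) : ℂ) := if_pos rfl
      rw [h1, if_pos (Subtype.ext rfl), Complex.conj_ofReal, ← hss i]
      push_cast
      field_simp
    · rw [if_neg hij, if_neg (by simp [Subtype.ext_iff, hij])]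
      simp
  obtain ⟨b, hb⟩ := hortho.exists_orthonormalBasis_extension_of_card_eq
    (by simp [finrank_euclideanSpace])
  let W : Matrix n n ℂ := Matrix.of fun k i => b i k
  have hWmem : W ∈ Matrix.unitaryGroup n ℂ := by
    rw [Matrix.mem_unitaryGroup_iff']
    ext i j
    have := b.orthonormal
    rw [orthonormal_iff_ite] at this
    have h := this i j
    rw [Matrix.mul_apply]
    simp only [Matrix.star_apply, Matrix.one_apply, W, Matrix.of_apply]
    rw [← h]
    simp [PiLp.inner_apply, RCLike.inner_apply, mul_comm]
  have hXW : X = W * Matrix.diagonal (fun i => (s i : ℂ)) := by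
    ext k i
    rw [Matrix.mul_diagonal]
    by_cases hdi : d i = 0
    · have hXk : X k i = 0 := by
        have h0 : (inner ℂ (col i) (col i) : ℂ) = 0 := by rw [hcol, if_pos rfl, hdi]; simp
        have : col i = 0 := inner_self_eq_zero.mp h0
        have := congrArg (fun x : EuclideanSpace ℂ n => x k) this
        simpa [col] using this
      rw [hXk]
      have : s i = 0 := by rw [hs]; simp [hdi]
      rw [this]
      simp
    · have hbi : b i = v i := hb i hdi
      have hsi : s i ≠ 0 := by
        have hdi' : 0 < d i := lt_of_le_of_ne (hd0 i) (Ne.symm hdi)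
        positivity
      have : W k i = (((s i)⁻¹ : ℝ) : ℂ) * X k i := by
        simp only [W, Matrix.of_apply, hbi, v]
        simp [col]
      rw [this]
      have hsiC : ((s i : ℝ) : ℂ) ≠ 0 := by exact_mod_cast hsi
      push_cast
      field_simp
  refine ⟨W, V, s, hWmem, hVmem, fun i => Real.sqrt_nonneg _, ?_⟩
  rw [← hXW, hX, Matrix.mul_assoc, hVV', Matrix.mul_one]



lemma traceNorm_nonneg (M : Matrix n n ℂ) : 0 ≤ traceNorm M := by
  obtain ⟨W, V, s, hW, hV, hs, hM⟩ := exists_svd M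
  rw [traceNorm_eq_of_svd hW hV hs hM]
  exact Finset.sum_nonneg fun i _ => hs i

lemma unitary_entry_abs_le {U : Matrix n n ℂ} (hU : U ∈ Matrix.unitaryGroup n ℂ) (i j : n) :
    ‖U i j‖ ≤ 1 := by
  have h : (star U * U) j j = 1 := by
    rw [Matrix.mem_unitaryGroup_iff'.mp hU, Matrix.one_apply_eq]
  rw [Matrix.mul_apply] at h
  have h2 : ∑ k, Complex.normSq (U k j) = 1 := by
    have h' := congrArg Complex.re h
    rw [Complex.re_sum, Complex.one_re] at h'
    rw [← h']
    apply Finset.sum_congr rfl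
    intro k _
    simp only [Matrix.star_apply, Complex.normSq_apply, Complex.mul_re, Complex.conj_re,
      Complex.conj_im, Complex.star_def]
    ring
  have h3 : Complex.normSq (U i j) ≤ 1 := by
    rw [← h2]
    exact Finset.single_le_sum (f := fun k => Complex.normSq (U k j))
      (fun k _ => Complex.normSq_nonneg _) (Finset.mem_univ i)
  rw [← Complex.sq_norm] at h3
  nlinarith [norm_nonneg (U i j)]

lemma re_trace_unitary_mul_le (M : Matrix n n ℂ) {U : Matrix n n ℂ}
    (hU : U ∈ Matrix.unitaryGroup n ℂ) : ((U * M).trace).re ≤ traceNorm M := by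
  obtain ⟨W, V, s, hW, hV, hs, hM⟩ := exists_svd M
  rw [traceNorm_eq_of_svd hW hV hs hM, hM]
  have hY : star V * (U * W) ∈ Matrix.unitaryGroup n ℂ :=
    mul_mem (Unitary.star_mem hV) (mul_mem hU hW)
  have htr : (U * (W * Matrix.diagonal (fun i => (s i : ℂ)) * star V)).trace
      = ((star V * (U * W)) * Matrix.diagonal (fun i => (s i : ℂ))).trace := by
    have he : U * (W * Matrix.diagonal (fun i => (s i : ℂ)) * star V)
        = (U * (W * Matrix.diagonal (fun i => (s i : ℂ)))) * star V := by
      simp only [Matrix.mul_assoc]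
    rw [he, Matrix.trace_mul_comm]
    simp only [Matrix.mul_assoc]
  rw [htr, Matrix.trace, Complex.re_sum]
  have hb : ∀ i, (((star V * (U * W)) * Matrix.diagonal (fun i => (s i : ℂ))).diag i).re ≤ s i := by
    intro i
    rw [Matrix.diag_apply, Matrix.mul_diagonal]
    calc ((star V * (U * W)) i i * (s i : ℂ)).re
        ≤ ‖(star V * (U * W)) i i * (s i : ℂ)‖ := Complex.re_le_norm _
      _ = ‖(star V * (U * W)) i i‖ * s i := by
          rw [norm_mul, Complex.norm_real, Real.norm_eq_abs, abs_of_nonneg (hs i)]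
      _ ≤ 1 * s i := by
          apply mul_le_mul_of_nonneg_right _ (hs i)
          exact unitary_entry_abs_le hY i i
      _ = s i := one_mul _
  exact Finset.sum_le_sum fun i _ => hb i

lemma exists_unitary_trace_eq (M : Matrix n n ℂ) :
    ∃ U ∈ Matrix.unitaryGroup n ℂ, ((U * M).trace).re = traceNorm M := by
  obtain ⟨W, V, s, hW, hV, hs, hM⟩ := exists_svd M
  refine ⟨V * star W, mul_mem hV (Unitary.star_mem hW), ?_⟩
  rw [traceNorm_eq_of_svd hW hV hs hM, hM]
  have he : V * star W * (W * Matrix.diagonal (fun i => (s i : ℂ)) * star V)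
      = V * Matrix.diagonal (fun i => (s i : ℂ)) * star V := by
    have hWW : star W * W = 1 := Matrix.mem_unitaryGroup_iff'.mp hW
    simp only [Matrix.mul_assoc]
    rw [← Matrix.mul_assoc (star W) W, hWW, Matrix.one_mul]
  rw [he, trace_unitary_conj _ hV, Matrix.trace_diagonal, Complex.re_sum]
  simp

lemma re_trace_le_traceNorm (M : Matrix n n ℂ) : (M.trace).re ≤ traceNorm M := by
  have := re_trace_unitary_mul_le M (one_mem (Matrix.unitaryGroup n ℂ))
  rwa [Matrix.one_mul] at this

lemma traceNorm_triangle (A B : Matrix n n ℂ) :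
    traceNorm (A + B) ≤ traceNorm A + traceNorm B := by
  obtain ⟨U, hU, hEq⟩ := exists_unitary_trace_eq (A + B)
  rw [← hEq, Matrix.mul_add, Matrix.trace_add, Complex.add_re]
  exact add_le_add (re_trace_unitary_mul_le A hU) (re_trace_unitary_mul_le B hU)

/-- Squared Frobenius norm. -/
noncomputable def frobSq (A : Matrix n n ℂ) : ℝ := ∑ i, ∑ j, Complex.normSq (A i j)

lemma frobSq_nonneg (A : Matrix n n ℂ) : 0 ≤ frobSq A :=
  Finset.sum_nonneg fun _ _ => Finset.sum_nonneg fun _ _ => Complex.normSq_nonneg _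

lemma trace_conjTranspose_mul_self (A : Matrix n n ℂ) :
    (Aᴴ * A).trace = ((frobSq A : ℝ) : ℂ) := by
  rw [Matrix.trace, frobSq]
  push_cast
  rw [Finset.sum_comm]
  apply Finset.sum_congr rfl
  intro i _
  rw [Matrix.diag_apply, Matrix.mul_apply]
  apply Finset.sum_congr rfl
  intro k _
  rw [Matrix.conjTranspose_apply, Complex.normSq_eq_conj_mul_self]
  rfl

lemma frobSq_unitary {U : Matrix n n ℂ} (hU : U ∈ Matrix.unitaryGroup n ℂ) (A : Matrix n n ℂ) :
    frobSq (U * A) = frobSq A := by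
  have h : ((U * A)ᴴ * (U * A)) = Aᴴ * A := by
    rw [Matrix.conjTranspose_mul]
    have hUU : Uᴴ * U = 1 := by
      rw [← Matrix.star_eq_conjTranspose]; exact Matrix.mem_unitaryGroup_iff'.mp hU
    calc Aᴴ * Uᴴ * (U * A) = Aᴴ * ((Uᴴ * U) * A) := by simp only [Matrix.mul_assoc]
      _ = Aᴴ * A := by rw [hUU, Matrix.one_mul]
  have h2 := congrArg Matrix.trace h
  rw [trace_conjTranspose_mul_self, trace_conjTranspose_mul_self] at h2
  exact_mod_cast h2

lemma traceNorm_mul_le (A B : Matrix n n ℂ) :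
    traceNorm (A * B) ≤ Real.sqrt (frobSq A) * Real.sqrt (frobSq B) := by
  obtain ⟨U, hU, hEq⟩ := exists_unitary_trace_eq (A * B)
  rw [← hEq]
  set C := U * A with hC
  have h1 : U * (A * B) = C * B := by rw [hC, Matrix.mul_assoc]
  set S := ∑ i, ∑ j, ‖C i j‖ * ‖B j i‖ with hSdef
  have h2 : ((C * B).trace).re ≤ S := by
    calc ((C * B).trace).re ≤ ‖(C * B).trace‖ := Complex.re_le_norm _
      _ ≤ ∑ i, ‖(C * B).diag i‖ := by
          rw [Matrix.trace]
          exact norm_sum_le _ _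
      _ ≤ S := by
          apply Finset.sum_le_sum
          intro i _
          rw [Matrix.diag_apply, Matrix.mul_apply]
          calc ‖∑ j, C i j * B j i‖ ≤ ∑ j, ‖C i j * B j i‖ :=
                norm_sum_le _ _
            _ = ∑ j, ‖C i j‖ * ‖B j i‖ := by
                apply Finset.sum_congr rfl; intro j _; rw [norm_mul]
  have hS0 : 0 ≤ S := Finset.sum_nonneg fun _ _ => Finset.sum_nonneg fun _ _ =>
    mul_nonneg (norm_nonneg _) (norm_nonneg _)
  have e1 : S = ∑ p : n × n, ‖C p.1 p.2‖ * ‖B p.2 p.1‖ := by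
    rw [hSdef, ← Finset.univ_product_univ, Finset.sum_product]
  have e2 : ∑ p : n × n, ‖C p.1 p.2‖ ^ 2 = frobSq C := by
    rw [frobSq, ← Finset.univ_product_univ, Finset.sum_product]
    apply Finset.sum_congr rfl; intro i _
    apply Finset.sum_congr rfl; intro j _
    rw [Complex.sq_norm]
  have e3 : ∑ p : n × n, ‖B p.2 p.1‖ ^ 2 = frobSq B := by
    rw [frobSq, ← Finset.univ_product_univ, Finset.sum_product]
    rw [Finset.sum_comm]
    apply Finset.sum_congr rfl; intro i _
    apply Finset.sum_congr rfl; intro j _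
    rw [Complex.sq_norm]
  have hCS := Finset.sum_mul_sq_le_sq_mul_sq (Finset.univ : Finset (n × n))
    (fun p => ‖C p.1 p.2‖) (fun p => ‖B p.2 p.1‖)
  rw [e2, e3, ← e1] at hCS
  have hfin : S ≤ Real.sqrt (frobSq C) * Real.sqrt (frobSq B) := by
    calc S = Real.sqrt (S ^ 2) := by rw [Real.sqrt_sq hS0]
      _ ≤ Real.sqrt (frobSq C * frobSq B) := Real.sqrt_le_sqrt hCS
      _ = Real.sqrt (frobSq C) * Real.sqrt (frobSq B) :=
          Real.sqrt_mul (frobSq_nonneg C) _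
  have hCA : frobSq C = frobSq A := frobSq_unitary hU A
  rw [h1]
  calc ((C * B).trace).re ≤ S := h2
    _ ≤ Real.sqrt (frobSq C) * Real.sqrt (frobSq B) := hfin
    _ = Real.sqrt (frobSq A) * Real.sqrt (frobSq B) := by rw [hCA]

lemma unitary_col_sum {U : Matrix n n ℂ} (hU : U ∈ Matrix.unitaryGroup n ℂ) (j : n) :
    ∑ k, Complex.normSq (U k j) = 1 := by
  have h : (star U * U) j j = 1 := by
    rw [Matrix.mem_unitaryGroup_iff'.mp hU, Matrix.one_apply_eq]
  rw [Matrix.mul_apply] at h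
  have h' := congrArg Complex.re h
  rw [Complex.re_sum, Complex.one_re] at h'
  rw [← h']
  apply Finset.sum_congr rfl
  intro k _
  simp only [Matrix.star_apply, Complex.normSq_apply, Complex.mul_re, Complex.conj_re,
    Complex.conj_im, Complex.star_def]
  ring

lemma traceNorm_isHermitian {M : Matrix n n ℂ} (hM : M.IsHermitian) :
    traceNorm M = ∑ i, |hM.eigenvalues i| := by
  set V : Matrix n n ℂ := (hM.eigenvectorUnitary : Matrix n n ℂ) with hV
  have hVmem : V ∈ Matrix.unitaryGroup n ℂ := hM.eigenvectorUnitary.2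
  set lam := hM.eigenvalues with hlam
  set u : n → ℂ := fun i => if lam i < 0 then -1 else 1 with hu
  have hWmem : V * Matrix.diagonal u ∈ Matrix.unitaryGroup n ℂ := by
    apply mul_mem hVmem
    rw [Matrix.mem_unitaryGroup_iff, Matrix.star_eq_conjTranspose,
      Matrix.diagonal_conjTranspose, Matrix.diagonal_mul_diagonal]
    have h1 : (fun i => u i * star u i) = fun _ => (1 : ℂ) := by
      funext i
      by_cases h : lam i < 0 <;> simp [hu, h]
    rw [h1, Matrix.diagonal_one]
  have key : M = (V * Matrix.diagonal u) * Matrix.diagonal (fun i => ((|lam i| : ℝ) : ℂ))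
      * star V := by
    rw [Matrix.mul_assoc V, Matrix.diagonal_mul_diagonal]
    have h2 : (fun i => u i * ((|lam i| : ℝ) : ℂ)) = fun i => ((lam i : ℝ) : ℂ) := by
      funext i
      by_cases h : lam i < 0
      · simp [hu, h, abs_of_neg h]
      · simp [hu, h, abs_of_nonneg (not_lt.mp h)]
    rw [h2]
    exact spectral_thm hM
  exact traceNorm_eq_of_svd hWmem hVmem (fun i => abs_nonneg _) key

lemma sum_abs_diag_le {M : Matrix n n ℂ} (hM : M.IsHermitian) {V : Matrix n n ℂ}
    (hV : V ∈ Matrix.unitaryGroup n ℂ) :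
    ∑ i, ‖(star V * M * V) i i‖ ≤ traceNorm M := by
  rw [traceNorm_isHermitian hM]
  set W : Matrix n n ℂ := (hM.eigenvectorUnitary : Matrix n n ℂ) with hW
  have hWmem : W ∈ Matrix.unitaryGroup n ℂ := hM.eigenvectorUnitary.2
  set lam := hM.eigenvalues with hlam
  set Y := star V * W with hY
  have hYmem : Y ∈ Matrix.unitaryGroup n ℂ := mul_mem (Unitary.star_mem hV) hWmem
  have hentry : ∀ i, (star V * M * V) i i
      = ∑ j, (lam j : ℂ) * (Y i j * star (Y i j)) := by
    intro i
    have hMeq : star V * M * V = Y * Matrix.diagonal (fun j => ((lam j : ℝ) : ℂ)) * star Y := by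
      rw [hY]
      have : star (star V * W) = star W * V := by
        rw [StarMul.star_mul, star_star]
      rw [this]
      conv_lhs => rw [spectral_thm hM]
      simp only [Matrix.mul_assoc]
      rfl
    rw [hMeq, Matrix.mul_apply]
    apply Finset.sum_congr rfl
    intro j _
    rw [Matrix.mul_diagonal, Matrix.star_apply]
    ring
  calc ∑ i, ‖(star V * M * V) i i‖
      ≤ ∑ i, ∑ j, |lam j| * Complex.normSq (Y i j) := by
        apply Finset.sum_le_sum
        intro i _
        rw [hentry i]
        calc ‖∑ j, (lam j : ℂ) * (Y i j * star (Y i j))‖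
            ≤ ∑ j, ‖(lam j : ℂ) * (Y i j * star (Y i j))‖ :=
              norm_sum_le _ _
          _ = ∑ j, |lam j| * Complex.normSq (Y i j) := by
              apply Finset.sum_congr rfl
              intro j _
              rw [norm_mul, Complex.norm_real, Real.norm_eq_abs]
              congr 1
              rw [Complex.star_def, Complex.mul_conj, Complex.norm_real, Real.norm_eq_abs,
                abs_of_nonneg (Complex.normSq_nonneg _)]
    _ = ∑ j, |lam j| := by
        rw [Finset.sum_comm]
        apply Finset.sum_congr rfl
        intro j _
        rw [← Finset.mul_sum, unitary_col_sum hYmem j, mul_one]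

lemma conj_mul {V : Matrix n n ℂ} (hV : V ∈ Matrix.unitaryGroup n ℂ) (X Y : Matrix n n ℂ) :
    (star V * X * V) * (star V * Y * V) = star V * (X * Y) * V := by
  have hVV' : V * star V = 1 := Matrix.mem_unitaryGroup_iff.mp hV
  simp only [Matrix.mul_assoc]
  rw [← Matrix.mul_assoc V (star V) _, hVV', Matrix.one_mul]

lemma conj_mul' {V : Matrix n n ℂ} (hV : V ∈ Matrix.unitaryGroup n ℂ) (X Y : Matrix n n ℂ) :
    (V * X * star V) * (V * Y * star V) = V * (X * Y) * star V := by
  have hVV : star V * V = 1 := Matrix.mem_unitaryGroup_iff'.mp hV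
  simp only [Matrix.mul_assoc]
  rw [← Matrix.mul_assoc (star V) V _, hVV, Matrix.one_mul]

lemma powers_stormer {ρ σ : Matrix n n ℂ} (hρ : ρ.PosSemidef) (hσ : σ.PosSemidef) :
    (ρ.trace).re + (σ.trace).re - 2 * traceNorm (hρ.sqrt * hσ.sqrt) ≤ traceNorm (ρ - σ) := by
  set A := hρ.sqrt with hAdef
  set B := hσ.sqrt with hBdef
  have hA : A.PosSemidef := hρ.posSemidef_sqrt
  have hB : B.PosSemidef := hσ.posSemidef_sqrt
  have hA2 : A * A = ρ := hρ.sqrt_mul_self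
  have hB2 : B * B = σ := hσ.sqrt_mul_self
  have hC : (A - B).IsHermitian := hA.1.sub hB.1
  set V : Matrix n n ℂ := (hC.eigenvectorUnitary : Matrix n n ℂ) with hVdef
  have hVmem : V ∈ Matrix.unitaryGroup n ℂ := hC.eigenvectorUnitary.2
  have hVV : star V * V = 1 := Matrix.mem_unitaryGroup_iff'.mp hVmem
  set μ : n → ℝ := hC.eigenvalues with hμ
  set D : Matrix n n ℂ := Matrix.diagonal (fun i => ((μ i : ℝ) : ℂ)) with hD
  have hspec : A - B = V * D * star V := spectral_thm hC
  have hCV : star V * (A - B) * V = D := by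
    rw [hspec]
    simp only [Matrix.mul_assoc]
    rw [hVV, Matrix.mul_one, ← Matrix.mul_assoc, hVV, Matrix.one_mul]
  set G : Matrix n n ℂ := star V * (A + B) * V with hG
  have hGC : star V * ((ρ - σ) + (ρ - σ)) * V = D * G + G * D := by
    have h2 : (ρ - σ) + (ρ - σ) = (A - B) * (A + B) + (A + B) * (A - B) := by
      rw [← hA2, ← hB2]; noncomm_ring
    rw [h2, Matrix.mul_add, Matrix.add_mul, ← conj_mul hVmem (A - B) (A + B),
      ← conj_mul hVmem (A + B) (A - B), hCV]
  have hentry : ∀ i, (star V * (ρ - σ) * V) i i = (μ i : ℂ) * G i i := by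
    intro i
    have hl : star V * ((ρ - σ) + (ρ - σ)) * V
        = star V * (ρ - σ) * V + star V * (ρ - σ) * V := by
      rw [Matrix.mul_add, Matrix.add_mul]
    have h := congrFun (congrFun (hl ▸ hGC) i) i
    have hr : (D * G + G * D) i i = (μ i : ℂ) * G i i + (μ i : ℂ) * G i i := by
      rw [Matrix.add_apply, hD, Matrix.diagonal_mul, Matrix.mul_diagonal]; ring
    rw [hr] at h
    have h' : (star V * (ρ - σ) * V + star V * (ρ - σ) * V) i i
        = (star V * (ρ - σ) * V) i i + (star V * (ρ - σ) * V) i i := rfl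
    rw [h'] at h
    linear_combination h / 2
  have hDii : ∀ i, D i i = ((μ i : ℝ) : ℂ) := fun i => by
    rw [hD, Matrix.diagonal_apply_eq]
  have him : ∀ i, |μ i| ≤ (G i i).re := by
    intro i
    have e1 : star V * (A + A) * V = G + D := by
      have hAA : A + A = (A + B) + (A - B) := by abel
      rw [hAA, Matrix.mul_add, Matrix.add_mul, hCV]
    have e2 : star V * (B + B) * V = G - D := by
      have hBB : B + B = (A + B) - (A - B) := by abel
      rw [hBB, Matrix.mul_sub, Matrix.sub_mul, hCV]
    have hP1 : (star V * (A + A) * V).PosSemidef := by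
      rw [Matrix.star_eq_conjTranspose]
      exact (hA.add hA).conjTranspose_mul_mul_same V
    have hP2 : (star V * (B + B) * V).PosSemidef := by
      rw [Matrix.star_eq_conjTranspose]
      exact (hB.add hB).conjTranspose_mul_mul_same V
    have d1 := (diag_entry_of_posSemidef hP1 i).1
    have d2 := (diag_entry_of_posSemidef hP2 i).1
    rw [e1] at d1; rw [e2] at d2
    have hd1 : ((G + D) i i).re = (G i i).re + μ i := by
      rw [Matrix.add_apply, hDii i, Complex.add_re, Complex.ofReal_re]
    have hd2 : ((G - D) i i).re = (G i i).re - μ i := by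
      rw [Matrix.sub_apply, hDii i, Complex.sub_re, Complex.ofReal_re]
    rw [hd1] at d1; rw [hd2] at d2
    rw [abs_le]; constructor <;> linarith
  have hsum1 : ∑ i, μ i ^ 2 ≤ traceNorm (ρ - σ) := by
    have hHerm : (ρ - σ).IsHermitian := hρ.1.sub hσ.1
    calc ∑ i, μ i ^ 2 ≤ ∑ i, ‖(star V * (ρ - σ) * V) i i‖ := by
          apply Finset.sum_le_sum
          intro i _
          rw [hentry i, norm_mul, Complex.norm_real, Real.norm_eq_abs]
          nlinarith [abs_nonneg (μ i), norm_nonneg (G i i), him i,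
            Complex.re_le_norm (G i i), sq_abs (μ i)]
      _ ≤ traceNorm (ρ - σ) := sum_abs_diag_le hHerm hVmem
  have hsum2 : (ρ.trace).re + (σ.trace).re - 2 * ((A * B).trace).re = ∑ i, μ i ^ 2 := by
    have htr : ((A - B) * (A - B)).trace
        = ρ.trace + σ.trace - ((A * B).trace + (A * B).trace) := by
      have hexp : (A - B) * (A - B) = (A * A + B * B) - (A * B + B * A) := by noncomm_ring
      rw [hexp, Matrix.trace_sub, Matrix.trace_add, Matrix.trace_add, hA2, hB2,
        Matrix.trace_mul_comm B A]
    have htr2 : ((A - B) * (A - B)).trace = ((∑ i, μ i ^ 2 : ℝ) : ℂ) := by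
      have hEE : (A - B) * (A - B) = V * (D * D) * star V := by
        conv_lhs => rw [hspec]
        rw [conj_mul' hVmem]
      rw [hEE, trace_unitary_conj _ hVmem, hD, Matrix.diagonal_mul_diagonal,
        Matrix.trace_diagonal]
      push_cast
      apply Finset.sum_congr rfl
      intro i _
      ring
    rw [htr] at htr2
    have hre := congrArg Complex.re htr2
    simp only [Complex.sub_re, Complex.add_re, Complex.ofReal_re] at hre
    linarith
  have h3 : ((A * B).trace).re ≤ traceNorm (A * B) := re_trace_le_traceNorm _
  linarith

lemma classical_ineq {p q : ℝ} (hp0 : 0 ≤ p) (hp1 : p ≤ 1) (hq0 : 0 ≤ q) (hq1 : q ≤ 1) :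
    (p - q) ^ 2 + (Real.sqrt p * Real.sqrt q
      + Real.sqrt (1 - p) * Real.sqrt (1 - q)) ^ 2 ≤ 1 := by
  set a := Real.sqrt p with ha
  set b := Real.sqrt q with hb
  set c := Real.sqrt (1 - p) with hc
  set d := Real.sqrt (1 - q) with hd
  have ha2 : a ^ 2 = p := Real.sq_sqrt hp0
  have hb2 : b ^ 2 = q := Real.sq_sqrt hq0
  have hc2 : c ^ 2 = 1 - a ^ 2 := by rw [ha2]; exact Real.sq_sqrt (by linarith)
  have hd2 : d ^ 2 = 1 - b ^ 2 := by rw [hb2]; exact Real.sq_sqrt (by linarith)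
  have key : (a ^ 2 - b ^ 2) ^ 2 + (a * b + c * d) ^ 2
      = 1 - ((a * d - c * b) * (a * b - c * d)) ^ 2 := by
    linear_combination (d^2 + b^2*d^2 + b^2*c^2*d^2 - 2*a*b*c*d^3 - 2*a*b^3*c*d + a^2*d^4
      + 3*a^2*b^2*d^2 + a^2*b^4) * hc2 + (1 + b^2 - 2*a*b*c*d + a^2*d^2 + a^2*b^2 - a^4
      - a^4*d^2 - a^4*b^2) * hd2
  calc (p - q) ^ 2 + (a * b + c * d) ^ 2
      = (a ^ 2 - b ^ 2) ^ 2 + (a * b + c * d) ^ 2 := by rw [ha2, hb2]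
    _ = 1 - ((a * d - c * b) * (a * b - c * d)) ^ 2 := key
    _ ≤ 1 := by nlinarith [sq_nonneg ((a * d - c * b) * (a * b - c * d))]

lemma proj_trace_nonneg {P ρ : Matrix n n ℂ} (hρ : ρ.PosSemidef) (hPH : Pᴴ = P)
    (hPP : P * P = P) : 0 ≤ ((P * ρ).trace).re := by
  have hkey : (P * ρ).trace = (P * ρ * P).trace := by
    rw [Matrix.trace_mul_comm (P * ρ) P, ← Matrix.mul_assoc, hPP]
  rw [hkey]
  have hPSD : (P * ρ * P).PosSemidef := by
    have := hρ.mul_mul_conjTranspose_same P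
    rwa [hPH] at this
  exact trace_re_nonneg_of_posSemidef hPSD

set_option maxHeartbeats 800000 in
lemma upper_bound {ρ σ : Matrix n n ℂ} (hρ : ρ.PosSemidef) (hσ : σ.PosSemidef)
    (h1 : ρ.trace = 1) (h2 : σ.trace = 1) :
    (1 / 2) * traceNorm (ρ - σ)
      ≤ Real.sqrt (1 - traceNorm (hρ.sqrt * hσ.sqrt) ^ 2) := by
  set A := hρ.sqrt with hAdef
  set B := hσ.sqrt with hBdef
  have hA : A.PosSemidef := hρ.posSemidef_sqrt
  have hB : B.PosSemidef := hσ.posSemidef_sqrt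
  have hA2 : A * A = ρ := hρ.sqrt_mul_self
  have hB2 : B * B = σ := hσ.sqrt_mul_self
  have hAH : Aᴴ = A := hA.1
  have hBH : Bᴴ = B := hB.1
  have hΔ : (ρ - σ).IsHermitian := hρ.1.sub hσ.1
  set V : Matrix n n ℂ := (hΔ.eigenvectorUnitary : Matrix n n ℂ) with hVdef
  have hVmem : V ∈ Matrix.unitaryGroup n ℂ := hΔ.eigenvectorUnitary.2
  have hVV : star V * V = 1 := Matrix.mem_unitaryGroup_iff'.mp hVmem
  have hVV' : V * star V = 1 := Matrix.mem_unitaryGroup_iff.mp hVmem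
  set κ : n → ℝ := hΔ.eigenvalues with hκ
  have hspec : ρ - σ = V * Matrix.diagonal (fun i => ((κ i : ℝ) : ℂ)) * star V :=
    spectral_thm hΔ
  set g : n → ℂ := fun i => if 0 < κ i then 1 else 0 with hg
  set P : Matrix n n ℂ := V * Matrix.diagonal g * star V with hP
  have hPH : Pᴴ = P := by
    rw [← Matrix.star_eq_conjTranspose, hP]
    rw [StarMul.star_mul, StarMul.star_mul, star_star]
    rw [Matrix.star_eq_conjTranspose (Matrix.diagonal g), Matrix.diagonal_conjTranspose]
    have hgs : star g = g := by
      funext i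
      by_cases h : 0 < κ i <;> simp [hg, h]
    rw [hgs]
    simp only [Matrix.mul_assoc]
  have hPP : P * P = P := by
    rw [hP, conj_mul' hVmem, Matrix.diagonal_mul_diagonal]
    have hgg : (fun i => g i * g i) = g := by
      funext i
      by_cases h : 0 < κ i <;> simp [hg, h]
    rw [hgg]
  have hQ : (1 : Matrix n n ℂ) - P = V * Matrix.diagonal (fun i => 1 - g i) * star V := by
    have hone : (1 : Matrix n n ℂ) = V * Matrix.diagonal (fun _ => (1 : ℂ)) * star V := by
      rw [Matrix.diagonal_one, Matrix.mul_one, hVV']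
    calc (1 : Matrix n n ℂ) - P
        = V * Matrix.diagonal (fun _ => (1 : ℂ)) * star V - V * Matrix.diagonal g * star V := by
          rw [← hone, hP]
      _ = V * (Matrix.diagonal (fun _ => (1 : ℂ)) - Matrix.diagonal g) * star V := by
          rw [Matrix.mul_sub, Matrix.sub_mul]
      _ = V * Matrix.diagonal (fun i => 1 - g i) * star V := by
          rw [Matrix.diagonal_sub]
  have hQH : ((1 : Matrix n n ℂ) - P)ᴴ = 1 - P := by
    rw [Matrix.conjTranspose_sub, Matrix.conjTranspose_one, hPH]
  have hQQ : ((1 : Matrix n n ℂ) - P) * (1 - P) = 1 - P := by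
    have he : ((1 : Matrix n n ℂ) - P) * (1 - P) = 1 - P - P + P * P := by noncomm_ring
    rw [he, hPP]
    abel
  set p : ℝ := ((P * ρ).trace).re with hpdef
  set q : ℝ := ((P * σ).trace).re with hqdef
  -- p - q = ∑ max κ 0
  have htrPD : (P * (ρ - σ)).trace = ((∑ i, max (κ i) 0 : ℝ) : ℂ) := by
    have hPD : P * (ρ - σ) = V * Matrix.diagonal (fun i => g i * ((κ i : ℝ) : ℂ)) * star V := by
      rw [hP, hspec, conj_mul' hVmem, Matrix.diagonal_mul_diagonal]
    rw [hPD, trace_unitary_conj _ hVmem, Matrix.trace_diagonal]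
    push_cast
    apply Finset.sum_congr rfl
    intro i _
    by_cases h : 0 < κ i
    · simp [hg, h, max_eq_left (le_of_lt h)]
    · simp [hg, h, max_eq_right (le_of_not_gt h)]
  have hpq : p - q = ∑ i, max (κ i) 0 := by
    have : (P * (ρ - σ)).trace = (P * ρ).trace - (P * σ).trace := by
      rw [Matrix.mul_sub, Matrix.trace_sub]
    rw [this] at htrPD
    have := congrArg Complex.re htrPD
    simp only [Complex.sub_re, Complex.ofReal_re] at this
    rw [hpdef, hqdef]
    linarith
  -- sum of eigenvalues is zero
  have hκsum : ∑ i, κ i = 0 := by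
    have htrΔ : (ρ - σ).trace = 0 := by rw [Matrix.trace_sub, h1, h2, sub_self]
    have := hspec ▸ htrΔ
    rw [trace_unitary_conj _ hVmem, Matrix.trace_diagonal] at this
    have h' := congrArg Complex.re this
    rw [Complex.re_sum] at h'
    simpa using h'
  -- traceNorm (ρ - σ) = 2 * (p - q)
  have htn : traceNorm (ρ - σ) = 2 * (p - q) := by
    rw [traceNorm_isHermitian hΔ, hpq]
    have : ∀ i, |κ i| = 2 * max (κ i) 0 - κ i := by
      intro i
      rcases le_or_gt (κ i) 0 with h | h
      · rw [abs_of_nonpos h, max_eq_right h]; ring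
      · rw [abs_of_pos h, max_eq_left (le_of_lt h)]; ring
    rw [Finset.sum_congr rfl fun i _ => this i, Finset.sum_sub_distrib, hκsum,
      ← Finset.mul_sum]
    ring
  -- bounds on p and q
  have hp0 : 0 ≤ p := proj_trace_nonneg hρ hPH hPP
  have hq0 : 0 ≤ q := proj_trace_nonneg hσ hPH hPP
  have hp1 : p ≤ 1 := by
    have h' := proj_trace_nonneg hρ hQH hQQ
    have : ((1 - P) * ρ).trace = ρ.trace - (P * ρ).trace := by
      rw [Matrix.sub_mul, Matrix.one_mul, Matrix.trace_sub]
    rw [this, h1] at h'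
    simp only [Complex.sub_re, Complex.one_re] at h'
    linarith
  have hq1 : q ≤ 1 := by
    have h' := proj_trace_nonneg hσ hQH hQQ
    have : ((1 - P) * σ).trace = σ.trace - (P * σ).trace := by
      rw [Matrix.sub_mul, Matrix.one_mul, Matrix.trace_sub]
    rw [this, h2] at h'
    simp only [Complex.sub_re, Complex.one_re] at h'
    linarith
  -- Frobenius norms
  have hfrob : ∀ (X R : Matrix n n ℂ), frobSq X = ((Xᴴ * X).trace).re := by
    intro X _
    rw [trace_conjTranspose_mul_self, Complex.ofReal_re]
  have hfAP : frobSq (A * P) = p := by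
    rw [hfrob (A * P) 0]
    have : (A * P)ᴴ * (A * P) = P * ρ * P := by
      rw [Matrix.conjTranspose_mul, hAH, hPH, ← hA2]
      calc P * A * (A * P) = P * (A * A) * P := by simp only [Matrix.mul_assoc]
        _ = P * (A * A) * P := rfl
    rw [this]
    have : (P * ρ * P).trace = (P * ρ).trace := by
      rw [Matrix.trace_mul_comm (P * ρ) P, ← Matrix.mul_assoc, hPP]
    rw [this]
  have hfPB : frobSq (P * B) = q := by
    rw [hfrob (P * B) 0]
    have he : (P * B)ᴴ * (P * B) = B * P * B := by
      rw [Matrix.conjTranspose_mul, hBH, hPH]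
      calc B * P * (P * B) = B * (P * P) * B := by simp only [Matrix.mul_assoc]
        _ = B * P * B := by rw [hPP, Matrix.mul_assoc]
    rw [he]
    have : (B * P * B).trace = (P * σ).trace := by
      rw [Matrix.trace_mul_comm (B * P) B, Matrix.mul_assoc, ← hB2, ← Matrix.mul_assoc]
      rw [Matrix.trace_mul_comm]
      rw [Matrix.mul_assoc]
    rw [this]
  have hfAQ : frobSq (A * (1 - P)) = 1 - p := by
    rw [hfrob (A * (1 - P)) 0]
    have he : (A * (1 - P))ᴴ * (A * (1 - P)) = (1 - P) * ρ * (1 - P) := by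
      rw [Matrix.conjTranspose_mul, hAH, hQH, ← hA2]
      calc (1 - P) * A * (A * (1 - P)) = (1 - P) * (A * A) * (1 - P) := by
            simp only [Matrix.mul_assoc]
        _ = (1 - P) * (A * A) * (1 - P) := rfl
    rw [he]
    have : ((1 - P) * ρ * (1 - P)).trace = ((1 - P) * ρ).trace := by
      rw [Matrix.trace_mul_comm ((1 - P) * ρ) (1 - P), ← Matrix.mul_assoc, hQQ]
    rw [this]
    have : ((1 - P) * ρ).trace = ρ.trace - (P * ρ).trace := by
      rw [Matrix.sub_mul, Matrix.one_mul, Matrix.trace_sub]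
    rw [this, h1]
    simp [hpdef]
  have hfQB : frobSq ((1 - P) * B) = 1 - q := by
    rw [hfrob ((1 - P) * B) 0]
    have he : ((1 - P) * B)ᴴ * ((1 - P) * B) = B * (1 - P) * B := by
      rw [Matrix.conjTranspose_mul, hBH, hQH]
      calc B * (1 - P) * ((1 - P) * B) = B * ((1 - P) * (1 - P)) * B := by
            simp only [Matrix.mul_assoc]
        _ = B * (1 - P) * B := by rw [hQQ, Matrix.mul_assoc]
    rw [he]
    have h3 : (B * (1 - P) * B).trace = ((1 - P) * σ).trace := by
      rw [Matrix.trace_mul_comm (B * (1 - P)) B, ← Matrix.mul_assoc, hB2,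
        Matrix.trace_mul_comm]
    rw [h3]
    have : ((1 - P) * σ).trace = σ.trace - (P * σ).trace := by
      rw [Matrix.sub_mul, Matrix.one_mul, Matrix.trace_sub]
    rw [this, h2]
    simp [hqdef]
  -- the splitting bound
  have hsplit : traceNorm (A * B) ≤ Real.sqrt p * Real.sqrt q
      + Real.sqrt (1 - p) * Real.sqrt (1 - q) := by
    have hAB : A * B = (A * P) * (P * B) + (A * (1 - P)) * ((1 - P) * B) := by
      have e1 : (A * P) * (P * B) = A * P * B := by
        calc (A * P) * (P * B) = A * (P * P) * B := by simp only [Matrix.mul_assoc]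
          _ = A * P * B := by rw [hPP]
      have e2 : (A * (1 - P)) * ((1 - P) * B) = A * (1 - P) * B := by
        calc (A * (1 - P)) * ((1 - P) * B) = A * ((1 - P) * (1 - P)) * B := by
              simp only [Matrix.mul_assoc]
          _ = A * (1 - P) * B := by rw [hQQ]
      rw [e1, e2]
      rw [Matrix.mul_sub, Matrix.mul_one, Matrix.sub_mul]
      abel
    calc traceNorm (A * B)
        ≤ traceNorm ((A * P) * (P * B)) + traceNorm ((A * (1 - P)) * ((1 - P) * B)) := by
          rw [hAB]; exact traceNorm_triangle _ _
      _ ≤ Real.sqrt (frobSq (A * P)) * Real.sqrt (frobSq (P * B))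
          + Real.sqrt (frobSq (A * (1 - P))) * Real.sqrt (frobSq ((1 - P) * B)) :=
          add_le_add (traceNorm_mul_le _ _) (traceNorm_mul_le _ _)
      _ = Real.sqrt p * Real.sqrt q + Real.sqrt (1 - p) * Real.sqrt (1 - q) := by
          rw [hfAP, hfPB, hfAQ, hfQB]
  -- put it together
  set β : ℝ := Real.sqrt p * Real.sqrt q + Real.sqrt (1 - p) * Real.sqrt (1 - q) with hβ
  have hβ0 : 0 ≤ β := by positivity
  have htnAB0 : 0 ≤ traceNorm (A * B) := traceNorm_nonneg _
  have hF : traceNorm (A * B) ^ 2 ≤ β ^ 2 := by nlinarith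
  have hclass := classical_ineq hp0 hp1 hq0 hq1
  rw [htn]
  have hgoal2 : (p - q) ^ 2 ≤ 1 - traceNorm (A * B) ^ 2 := by linarith
  have hpq0 : 0 ≤ p - q := by
    have := traceNorm_nonneg (ρ - σ)
    rw [htn] at this
    linarith
  calc 1 / 2 * (2 * (p - q)) = p - q := by ring
    _ ≤ Real.sqrt (1 - traceNorm (A * B) ^ 2) := by
        exact Real.le_sqrt_of_sq_le hgoal2

end FvG

/-- Fuchs–van de Graaf inequalities:
`1 − √F(ρ,σ) ≤ ½‖ρ − σ‖₁ ≤ √(1 − F(ρ,σ))` for any two states `ρ, σ`. -/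
theorem stmt_5 {n : Type*} [Fintype n] [DecidableEq n]
    (ρ σ : Matrix n n ℂ) (hρ : ρ.PosSemidef) (hσ : σ.PosSemidef)
    (h1 : ρ.trace = 1) (h2 : σ.trace = 1) :
    1 - Real.sqrt (fidelity hρ hσ) ≤ (1 / 2) * traceNorm (ρ - σ) ∧
      (1 / 2) * traceNorm (ρ - σ) ≤ Real.sqrt (1 - fidelity hρ hσ) := by
  constructor
  · have hps := FvG.powers_stormer hρ hσ
    have hρre : (ρ.trace).re = 1 := by rw [h1]; simp
    have hσre : (σ.trace).re = 1 := by rw [h2]; simp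
    have hF : Real.sqrt (fidelity hρ hσ) = traceNorm (hρ.sqrt * hσ.sqrt) := by
      rw [fidelity, Real.sqrt_sq (FvG.traceNorm_nonneg _)]
    rw [hF]
    rw [hρre, hσre] at hps
    linarith
  · have hub := FvG.upper_bound hρ hσ h1 h2
    rw [fidelity]
    exact hub
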